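/- For every real ε with 0 < ε < 1/2 there exists a constant C > 0 such that for every positive integer N and every function α : ℕ → ℂ, one has Σ_{m=1}^{N} Σ_{n=1}^{N} |α_m| · |α_n| · Σ_{d | gcd(m,n)} (d²/(m·n))^{1/2−ε} ≤ C · N^{3ε} · Σ_{n=1}^{N} |α_n|². -/

import Mathlib

lemma exp_quad {x : ℝ} (hx : 0 ≤ x) : x ^ 2 / 4 ≤ Real.exp x := by
  have h := Real.add_one_le_exp (x / 2)
  have h2 : Real.exp x = Real.exp (x / 2) ^ 2 := by
    rw [sq, ← Real.exp_add]; ring_nf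
  nlinarith [Real.exp_pos (x / 2)]

lemma sum_rpow_le {s : ℝ} (hs : 0 < s) (hs1 : s ≤ 1) (N : ℕ) (hN : 1 ≤ N) :
    ∑ k ∈ Finset.Icc 1 N, (k : ℝ) ^ (s - 1) ≤ (1 + 1 / s) * (N : ℝ) ^ s := by
  have key : ∀ M : ℕ, 1 ≤ M →
      ∑ k ∈ Finset.Icc 1 M, (k : ℝ) ^ (s - 1) ≤ 1 + ((M : ℝ) ^ s - 1) / s := by
    intro M hM
    induction M with
    | zero => omega
    | succ n ih =>
      rcases Nat.eq_or_lt_of_le hM with h | h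
      · simp [← h, Real.one_rpow]
      · have hn1 : 1 ≤ n := by omega
        have hstep : ((n : ℝ) + 1) ^ (s - 1) ≤
            (((n : ℝ) + 1) ^ s - ((n : ℕ) : ℝ) ^ s) / s := by
          set t : ℝ := (n : ℝ) + 1 with ht
          have ht1 : (1 : ℝ) ≤ t := by
            have : (0:ℝ) ≤ (n:ℝ) := Nat.cast_nonneg n
            linarith
          have ht0 : (0 : ℝ) < t := by linarith
          clear_value t
          have hbern : (1 + (-1 / t)) ^ s ≤ 1 + s * (-1 / t) := by
            apply rpow_one_add_le_one_add_mul_self _ hs.le hs1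
            have h1t : 1 / t ≤ 1 := by rw [div_le_one ht0]; exact ht1
            rw [neg_div]
            exact neg_le_neg h1t
          have he1 : (1 + (-1 / t)) = (t - 1) / t := by
            field_simp
            ring
          have he2 : ((t - 1) / t) ^ s = (t - 1) ^ s / t ^ s := by
            rw [Real.div_rpow (by linarith) ht0.le]
          rw [he1, he2] at hbern
          have hts : (0 : ℝ) < t ^ s := Real.rpow_pos_of_pos ht0 s
          have hmul : (t - 1) ^ s ≤ (1 + s * (-1 / t)) * t ^ s := by
            rw [div_le_iff₀ hts] at hbern; linarith
          have hexp : (1 + s * (-1 / t)) * t ^ s = t ^ s - s * (t ^ s / t) := by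
            field_simp
            ring
          rw [hexp] at hmul
          have hsub : t ^ (s - 1) = t ^ s / t := by
            rw [Real.rpow_sub ht0, Real.rpow_one]
          rw [show ((n : ℕ) : ℝ) = t - 1 from by rw [ht]; ring, hsub,
            div_le_div_iff₀ ht0 hs]
          have e1 : s * (t ^ s / t) * t = s * t ^ s := by field_simp
          have e2 : s * (t ^ s / t) * t ≤ (t ^ s - (t - 1) ^ s) * t := by
            have := sub_nonneg.mpr hmul
            nlinarith [ht0]
          rw [mul_comm, ← e1]; exact e2
        rw [Finset.sum_Icc_succ_top (by omega : 1 ≤ n + 1)]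
        have hih := ih hn1
        push_cast
        have hfin : ((n : ℝ) ^ s - 1) / s + (((n : ℝ) + 1) ^ s - (n : ℝ) ^ s) / s
            = (((n : ℝ) + 1) ^ s - 1) / s := by ring
        push_cast at hstep
        linarith
  have h1 : (1 : ℝ) ≤ (N : ℝ) ^ s :=
    Real.one_le_rpow (by exact_mod_cast hN) hs.le
  have h2 : ((N : ℝ) ^ s - 1) / s ≤ (N : ℝ) ^ s / s := by gcongr; linarith
  have h3 : (1 + 1 / s) * (N : ℝ) ^ s = (N : ℝ) ^ s + (N : ℝ) ^ s / s := by ring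
  have := key N hN
  linarith

lemma divisor_bound {ε : ℝ} (hε : 0 < ε) :
    ∃ C : ℝ, 1 ≤ C ∧ ∀ n : ℕ, n ≠ 0 → (n.divisors.card : ℝ) ≤ C * (n : ℝ) ^ ε := by
  classical
  set L : ℝ := ε * Real.log 2 with hLdef
  have hL0 : 0 < L := mul_pos hε (Real.log_pos one_lt_two)
  set C' : ℝ := max 1 (8 / L ^ 2) with hC'def
  have hC'1 : (1 : ℝ) ≤ C' := le_max_left _ _
  have hC'0 : (0 : ℝ) < C' := lt_of_lt_of_le one_pos hC'1
  set B : ℕ := ⌈(2 : ℝ) ^ (1 / ε)⌉₊ with hBdef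
  -- key1 : (a+1) ≤ C' * (2^ε)^a
  have key1 : ∀ a : ℕ, (a : ℝ) + 1 ≤ C' * ((2 : ℝ) ^ ε) ^ a := by
    intro a
    have h2e : ((2 : ℝ) ^ ε) ^ a = Real.exp ((a : ℝ) * L) := by
      rw [Real.rpow_def_of_pos (by norm_num : (0:ℝ) < 2), ← Real.exp_nat_mul]
      congr 1
      rw [hLdef]; ring
    rw [h2e]
    rcases Nat.eq_zero_or_pos a with rfl | ha
    · simp [Real.exp_nonneg]
      linarith
    · have ha1 : (1 : ℝ) ≤ (a : ℝ) := by exact_mod_cast ha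
      have e1 : ((a : ℝ) * L) ^ 2 / 4 ≤ Real.exp ((a : ℝ) * L) :=
        exp_quad (by positivity)
      have e2 : (8 / L ^ 2) * (((a : ℝ) * L) ^ 2 / 4) ≤ C' * Real.exp ((a : ℝ) * L) := by
        apply mul_le_mul (le_max_right _ _) e1 (by positivity) hC'0.le
      have e3 : (8 / L ^ 2) * (((a : ℝ) * L) ^ 2 / 4) = 2 * (a : ℝ) ^ 2 := by
        field_simp
        ring
      nlinarith
  -- key2
  have key2 : ∀ p a : ℕ, 2 ≤ p →
      (a : ℝ) + 1 ≤ (if p ≤ B then C' else 1) * (((p : ℝ) ^ a) ^ ε) := by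
    intro p a hp
    have hp0 : (0 : ℝ) < (p : ℝ) := by positivity
    have hp2 : (2 : ℝ) ≤ (p : ℝ) := by exact_mod_cast hp
    have hpow : ((p : ℝ) ^ a) ^ ε = ((p : ℝ) ^ ε) ^ a := by
      rw [← Real.rpow_natCast ((p : ℝ) ^ ε) a, ← Real.rpow_mul hp0.le,
        ← Real.rpow_natCast (p : ℝ) a, ← Real.rpow_mul hp0.le, mul_comm]
    rw [hpow]
    split_ifs with hB
    · calc (a : ℝ) + 1 ≤ C' * ((2 : ℝ) ^ ε) ^ a := key1 a
        _ ≤ C' * ((p : ℝ) ^ ε) ^ a := by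
          apply mul_le_mul_of_nonneg_left _ hC'0.le
          apply pow_le_pow_left₀ (by positivity)
          exact Real.rpow_le_rpow (by norm_num) hp2 hε.le
    · rw [one_mul]
      have hpB : (2 : ℝ) ^ (1 / ε) ≤ (p : ℝ) := by
        have h1 : ((B : ℕ) : ℝ) < (p : ℝ) := by exact_mod_cast Nat.lt_of_not_le hB
        calc (2 : ℝ) ^ (1 / ε) ≤ (B : ℝ) := Nat.le_ceil _
          _ ≤ (p : ℝ) := h1.le
      have h2 : (2 : ℝ) ≤ (p : ℝ) ^ ε := by
        calc (2 : ℝ) = ((2 : ℝ) ^ (1 / ε)) ^ ε := by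
              rw [← Real.rpow_mul (by norm_num), one_div_mul_cancel (ne_of_gt hε),
                Real.rpow_one]
          _ ≤ (p : ℝ) ^ ε := Real.rpow_le_rpow (by positivity) hpB hε.le
      calc (a : ℝ) + 1 ≤ (2 : ℝ) ^ a := by
            have h := Nat.succ_le_of_lt (Nat.lt_two_pow_self : a < 2 ^ a)
            exact_mod_cast h
        _ ≤ ((p : ℝ) ^ ε) ^ a := pow_le_pow_left₀ (by norm_num) h2 a
  refine ⟨C' ^ (B + 1), one_le_pow₀ hC'1, ?_⟩
  intro n hn
  rw [Nat.card_divisors hn]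
  have hcast : ((n.primeFactors.prod fun p => n.factorization p + 1 : ℕ) : ℝ)
      = ∏ p ∈ n.primeFactors, ((n.factorization p : ℝ) + 1) := by
    push_cast; rfl
  rw [hcast]
  have step1 : ∏ p ∈ n.primeFactors, ((n.factorization p : ℝ) + 1)
      ≤ ∏ p ∈ n.primeFactors,
          ((if p ≤ B then C' else 1) * (((p : ℝ) ^ n.factorization p) ^ ε)) := by
    apply Finset.prod_le_prod
    · intro p _; positivity
    · intro p hp
      exact key2 p _ (Nat.prime_of_mem_primeFactors hp).two_le
  rw [Finset.prod_mul_distrib] at step1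
  have step2 : ∏ p ∈ n.primeFactors, (((p : ℝ) ^ n.factorization p) ^ ε) = (n : ℝ) ^ ε := by
    rw [Real.finset_prod_rpow _ _ (fun p _ => by positivity)]
    congr 1
    have h := Nat.factorization_prod_pow_eq_self hn
    rw [Finsupp.prod, Nat.support_factorization] at h
    exact_mod_cast congrArg (fun k : ℕ => (k : ℝ)) h
  rw [step2] at step1
  have step3 : ∏ p ∈ n.primeFactors, (if p ≤ B then C' else 1) ≤ C' ^ (B + 1) := by
    rw [Finset.prod_ite, Finset.prod_const_one, mul_one, Finset.prod_const]
    apply pow_le_pow_right₀ hC'1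
    have hsub : (n.primeFactors.filter fun p => p ≤ B) ⊆ Finset.range (B + 1) := by
      intro x hx
      simp only [Finset.mem_filter] at hx
      simp only [Finset.mem_range]
      omega
    calc (n.primeFactors.filter fun p => p ≤ B).card ≤ (Finset.range (B + 1)).card :=
          Finset.card_le_card hsub
      _ = B + 1 := Finset.card_range _
  calc ∏ p ∈ n.primeFactors, ((n.factorization p : ℝ) + 1)
      ≤ (∏ p ∈ n.primeFactors, (if p ≤ B then C' else 1)) * (n : ℝ) ^ ε := step1
    _ ≤ C' ^ (B + 1) * (n : ℝ) ^ ε := by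
        apply mul_le_mul_of_nonneg_right step3 (Real.rpow_nonneg (Nat.cast_nonneg n) ε)

lemma main_aux {ε C₂ : ℝ} (hε : 0 < ε) (hε2 : ε < 1 / 2) (hC₂1 : 1 ≤ C₂)
    (hτ : ∀ n : ℕ, n ≠ 0 → ((n.divisors.card : ℝ)) ≤ C₂ * (n : ℝ) ^ ε)
    (N : ℕ) (hN : 0 < N) (a : ℕ → ℝ) (ha0 : ∀ m, 0 ≤ a m) :
    (∑ m ∈ Finset.Icc 1 N, ∑ n ∈ Finset.Icc 1 N, a m * a n *
        ∑ d ∈ (Nat.gcd m n).divisors,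
          (((d : ℝ) ^ (2 : ℕ)) / ((m : ℝ) * (n : ℝ))) ^ ((1 : ℝ) / 2 - ε))
      ≤ ((1 + 1 / (2 * ε)) * C₂) * (N : ℝ) ^ (3 * ε)
        * ∑ n ∈ Finset.Icc 1 N, a n ^ (2 : ℕ) := by
  classical
  have hC₂0 : (0 : ℝ) < C₂ := lt_of_lt_of_le one_pos hC₂1
  set C₁ : ℝ := 1 + 1 / (2 * ε) with hC₁def
  have hC₁0 : 0 < C₁ := by positivity
  set σ : ℝ := 1 / 2 - ε with hσdef
  have hσ0 : 0 < σ := by rw [hσdef]; linarith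
  set I := Finset.Icc 1 N with hIdef
  have hmem : ∀ m ∈ I, 1 ≤ m ∧ m ≤ N := fun m hm => Finset.mem_Icc.mp hm
  have hN0 : (0 : ℝ) < (N : ℝ) := by exact_mod_cast hN
  -- divisors of gcd as a filter
  have hdiv : ∀ m ∈ I, ∀ n ∈ I, (Nat.gcd m n).divisors
      = I.filter (fun d => d ∣ m ∧ d ∣ n) := by
    intro m hm n hn
    obtain ⟨hm1, hmN⟩ := hmem m hm
    ext d
    simp only [Nat.mem_divisors, Finset.mem_filter, hIdef, Finset.mem_Icc]
    constructor
    · rintro ⟨hd, hg⟩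
      have h1 : d ∣ m := hd.trans (Nat.gcd_dvd_left m n)
      have h2 : d ∣ n := hd.trans (Nat.gcd_dvd_right m n)
      have hd1 : 1 ≤ d := Nat.pos_of_dvd_of_pos h1 (by omega)
      have hd2 : d ≤ N := le_trans (Nat.le_of_dvd (by omega) h1) hmN
      exact ⟨⟨hd1, hd2⟩, h1, h2⟩
    · rintro ⟨-, h1, h2⟩
      refine ⟨Nat.dvd_gcd h1 h2, fun hg => ?_⟩
      have := Nat.gcd_eq_zero_iff.mp hg
      omega
  -- Step 1 : complete the square over divisor classes
  have step1 : (∑ m ∈ I, ∑ n ∈ I, a m * a n *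
        ∑ d ∈ (Nat.gcd m n).divisors, (((d : ℝ) ^ (2 : ℕ)) / ((m : ℝ) * (n : ℝ))) ^ σ)
      = ∑ d ∈ I, (∑ m ∈ I.filter (fun m => d ∣ m), a m * ((d : ℝ) / (m : ℝ)) ^ σ) ^ 2 := by
    have e1 : ∀ m ∈ I, ∀ n ∈ I, a m * a n *
          ∑ d ∈ (Nat.gcd m n).divisors, (((d : ℝ) ^ (2 : ℕ)) / ((m : ℝ) * (n : ℝ))) ^ σ
        = ∑ d ∈ I, (if d ∣ m ∧ d ∣ n then
            (a m * ((d : ℝ) / (m : ℝ)) ^ σ) * (a n * ((d : ℝ) / (n : ℝ)) ^ σ) else 0) := by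
      intro m hm n hn
      rw [hdiv m hm n hn, Finset.sum_filter, Finset.mul_sum]
      refine Finset.sum_congr rfl fun d hd => ?_
      split_ifs with h
      · have harg : ((d : ℝ) ^ (2 : ℕ)) / ((m : ℝ) * (n : ℝ))
            = ((d : ℝ) / (m : ℝ)) * ((d : ℝ) / (n : ℝ)) := by ring
        rw [harg, Real.mul_rpow (by positivity) (by positivity)]
        ring
      · simp
    rw [Finset.sum_congr rfl (fun m hm => Finset.sum_congr rfl (fun n hn => e1 m hm n hn))]
    have swap : (∑ m ∈ I, ∑ n ∈ I, ∑ d ∈ I, (if d ∣ m ∧ d ∣ n then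
            (a m * ((d : ℝ) / (m : ℝ)) ^ σ) * (a n * ((d : ℝ) / (n : ℝ)) ^ σ) else 0))
        = ∑ d ∈ I, ∑ m ∈ I, ∑ n ∈ I, (if d ∣ m ∧ d ∣ n then
            (a m * ((d : ℝ) / (m : ℝ)) ^ σ) * (a n * ((d : ℝ) / (n : ℝ)) ^ σ) else 0) := by
      calc (∑ m ∈ I, ∑ n ∈ I, ∑ d ∈ I, (if d ∣ m ∧ d ∣ n then
            (a m * ((d : ℝ) / (m : ℝ)) ^ σ) * (a n * ((d : ℝ) / (n : ℝ)) ^ σ) else 0))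
          = ∑ m ∈ I, ∑ d ∈ I, ∑ n ∈ I, (if d ∣ m ∧ d ∣ n then
            (a m * ((d : ℝ) / (m : ℝ)) ^ σ) * (a n * ((d : ℝ) / (n : ℝ)) ^ σ) else 0) :=
            Finset.sum_congr rfl fun m _ => Finset.sum_comm
        _ = _ := Finset.sum_comm
    rw [swap]
    refine Finset.sum_congr rfl fun d _ => ?_
    rw [sq, Finset.sum_filter, Finset.sum_mul_sum]
    refine Finset.sum_congr rfl fun m _ => Finset.sum_congr rfl fun n _ => ?_
    by_cases h1 : d ∣ m <;> by_cases h2 : d ∣ n <;> simp [h1, h2]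
  -- Step 2 : bound on the Dirichlet-type sum in each divisor class
  have hW : ∀ d ∈ I, ∑ m ∈ I.filter (fun m => d ∣ m), (((d : ℝ) / (m : ℝ)) ^ σ) ^ 2
      ≤ C₁ * (N : ℝ) ^ (2 * ε) := by
    intro d hd
    obtain ⟨hd1, hdN⟩ := hmem d hd
    have key : ∀ m ∈ I.filter (fun m => d ∣ m),
        (((d : ℝ) / (m : ℝ)) ^ σ) ^ 2 = ((m / d : ℕ) : ℝ) ^ (2 * ε - 1) := by
      intro m hm
      rw [Finset.mem_filter] at hm
      obtain ⟨hmI, hdm⟩ := hm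
      obtain ⟨hm1, hmN⟩ := hmem m hmI
      obtain ⟨k, rfl⟩ := hdm
      have hk0 : 0 < k := by
        rcases Nat.eq_zero_or_pos k with rfl | h
        · simp at hm1
        · exact h
      rw [Nat.mul_div_cancel_left k (by omega : 0 < d)]
      have hk0R : (0 : ℝ) < (k : ℝ) := by exact_mod_cast hk0
      have hd0R : (0 : ℝ) < (d : ℝ) := by exact_mod_cast hd1
      have e : (d : ℝ) / ((d * k : ℕ) : ℝ) = ((k : ℝ))⁻¹ := by
        push_cast
        field_simp
      rw [e, ← Real.rpow_natCast ((((k : ℝ))⁻¹) ^ σ) 2, ← Real.rpow_mul (by positivity),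
        Real.inv_rpow hk0R.le, ← Real.rpow_neg hk0R.le]
      congr 1
      rw [hσdef]
      push_cast
      ring
    rw [Finset.sum_congr rfl key]
    have hinj : ∀ x ∈ I.filter (fun m => d ∣ m), ∀ y ∈ I.filter (fun m => d ∣ m),
        x / d = y / d → x = y := by
      intro x hx y hy hxy
      rw [Finset.mem_filter] at hx hy
      calc x = x / d * d := (Nat.div_mul_cancel hx.2).symm
        _ = y / d * d := by rw [hxy]
        _ = y := Nat.div_mul_cancel hy.2
    have himg := Finset.sum_image (s := I.filter (fun m => d ∣ m)) (g := fun m => m / d)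
      (f := fun k : ℕ => (k : ℝ) ^ (2 * ε - 1)) hinj
    rw [← himg]
    have hsub : (I.filter (fun m => d ∣ m)).image (· / d) ⊆ I := by
      intro k hk
      rw [Finset.mem_image] at hk
      obtain ⟨m, hm, rfl⟩ := hk
      rw [Finset.mem_filter] at hm
      obtain ⟨hm1, hmN⟩ := hmem m hm.1
      rw [hIdef, Finset.mem_Icc]
      constructor
      · exact (Nat.one_le_div_iff (by omega)).mpr (Nat.le_of_dvd (by omega) hm.2)
      · exact le_trans (Nat.div_le_self m d) hmN
    calc (∑ k ∈ (I.filter (fun m => d ∣ m)).image (· / d), (k : ℝ) ^ (2 * ε - 1))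
        ≤ ∑ k ∈ I, (k : ℝ) ^ (2 * ε - 1) :=
          Finset.sum_le_sum_of_subset_of_nonneg hsub
            (fun k _ _ => Real.rpow_nonneg (Nat.cast_nonneg k) _)
      _ ≤ (1 + 1 / (2 * ε)) * (N : ℝ) ^ (2 * ε) :=
          sum_rpow_le (by linarith) (by linarith) N hN
      _ = C₁ * (N : ℝ) ^ (2 * ε) := by rw [hC₁def]
  -- Step 3 : Cauchy–Schwarz in each class
  have hCS : ∀ d ∈ I, (∑ m ∈ I.filter (fun m => d ∣ m), a m * ((d : ℝ) / (m : ℝ)) ^ σ) ^ 2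
      ≤ (C₁ * (N : ℝ) ^ (2 * ε)) * ∑ m ∈ I.filter (fun m => d ∣ m), a m ^ 2 := by
    intro d hd
    have hre : (∑ m ∈ I.filter (fun m => d ∣ m), a m * ((d : ℝ) / (m : ℝ)) ^ σ)
        = ∑ m ∈ I.filter (fun m => d ∣ m), ((d : ℝ) / (m : ℝ)) ^ σ * a m :=
      Finset.sum_congr rfl fun m _ => mul_comm _ _
    rw [hre]
    calc (∑ m ∈ I.filter (fun m => d ∣ m), ((d : ℝ) / (m : ℝ)) ^ σ * a m) ^ 2
        ≤ (∑ m ∈ I.filter (fun m => d ∣ m), (((d : ℝ) / (m : ℝ)) ^ σ) ^ 2)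
          * ∑ m ∈ I.filter (fun m => d ∣ m), a m ^ 2 :=
          Finset.sum_mul_sq_le_sq_mul_sq _ _ _
      _ ≤ (C₁ * (N : ℝ) ^ (2 * ε)) * ∑ m ∈ I.filter (fun m => d ∣ m), a m ^ 2 := by
          apply mul_le_mul_of_nonneg_right (hW d hd)
          exact Finset.sum_nonneg fun m _ => sq_nonneg _
  -- Step 4 : divisor-count bound
  have stepE : ∑ d ∈ I, ∑ m ∈ I.filter (fun m => d ∣ m), a m ^ 2
      ≤ (C₂ * (N : ℝ) ^ ε) * ∑ m ∈ I, a m ^ 2 := by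
    have e1 : ∀ d ∈ I, ∑ m ∈ I.filter (fun m => d ∣ m), a m ^ 2
        = ∑ m ∈ I, if d ∣ m then a m ^ 2 else 0 := fun d _ => Finset.sum_filter _ _
    rw [Finset.sum_congr rfl e1, Finset.sum_comm]
    have e2 : ∀ m ∈ I, (∑ d ∈ I, if d ∣ m then a m ^ 2 else 0)
        = ((m.divisors.card : ℝ)) * a m ^ 2 := by
      intro m hm
      obtain ⟨hm1, hmN⟩ := hmem m hm
      have hfe : I.filter (fun d => d ∣ m) = m.divisors := by
        ext d
        simp only [Finset.mem_filter, Nat.mem_divisors, hIdef, Finset.mem_Icc]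
        constructor
        · rintro ⟨-, h1⟩
          exact ⟨h1, by omega⟩
        · rintro ⟨h1, -⟩
          have hd1 : 1 ≤ d := Nat.pos_of_dvd_of_pos h1 (by omega)
          have hd2 : d ≤ N := le_trans (Nat.le_of_dvd (by omega) h1) hmN
          exact ⟨⟨hd1, hd2⟩, h1⟩
      rw [← Finset.sum_filter, hfe, Finset.sum_const, nsmul_eq_mul]
    rw [Finset.sum_congr rfl e2, Finset.mul_sum]
    apply Finset.sum_le_sum
    intro m hm
    obtain ⟨hm1, hmN⟩ := hmem m hm
    have h1 : (m.divisors.card : ℝ) ≤ C₂ * (m : ℝ) ^ ε := hτ m (by omega)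
    have h2 : (m : ℝ) ^ ε ≤ (N : ℝ) ^ ε :=
      Real.rpow_le_rpow (by positivity) (by exact_mod_cast hmN) hε.le
    have h3 : (m.divisors.card : ℝ) ≤ C₂ * (N : ℝ) ^ ε := h1.trans (by nlinarith)
    exact mul_le_mul_of_nonneg_right h3 (sq_nonneg _)
  -- Assemble
  calc (∑ m ∈ I, ∑ n ∈ I, a m * a n *
        ∑ d ∈ (Nat.gcd m n).divisors, (((d : ℝ) ^ (2 : ℕ)) / ((m : ℝ) * (n : ℝ))) ^ σ)
      = ∑ d ∈ I, (∑ m ∈ I.filter (fun m => d ∣ m), a m * ((d : ℝ) / (m : ℝ)) ^ σ) ^ 2 := step1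
    _ ≤ ∑ d ∈ I, (C₁ * (N : ℝ) ^ (2 * ε)) * ∑ m ∈ I.filter (fun m => d ∣ m), a m ^ 2 :=
        Finset.sum_le_sum hCS
    _ = (C₁ * (N : ℝ) ^ (2 * ε)) * ∑ d ∈ I, ∑ m ∈ I.filter (fun m => d ∣ m), a m ^ 2 :=
        (Finset.mul_sum _ _ _).symm
    _ ≤ (C₁ * (N : ℝ) ^ (2 * ε)) * ((C₂ * (N : ℝ) ^ ε) * ∑ m ∈ I, a m ^ 2) := by
        apply mul_le_mul_of_nonneg_left stepE
        positivity
    _ = (C₁ * C₂) * (N : ℝ) ^ (3 * ε) * ∑ m ∈ I, a m ^ 2 := by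
        rw [show (3 : ℝ) * ε = 2 * ε + ε by ring, Real.rpow_add hN0]
        ring

/-- Diagonal-term estimate in the amplification method: for every 0 < ε < 1/2 there is a
constant C > 0 such that for every positive integer N and every α : ℕ → ℂ,
Σ_{m=1}^{N} Σ_{n=1}^{N} |α_m||α_n| Σ_{d | gcd(m,n)} (d²/(mn))^{1/2−ε}
  ≤ C · N^{3ε} · Σ_{n=1}^{N} |α_n|². -/
theorem diagonal_amplifier_bound :
    ∀ ε : ℝ, 0 < ε → ε < 1 / 2 → ∃ C : ℝ, 0 < C ∧
      ∀ N : ℕ, 0 < N → ∀ α : ℕ → ℂ,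
        (∑ m ∈ Finset.Icc 1 N, ∑ n ∈ Finset.Icc 1 N,
            ‖α m‖ * ‖α n‖ *
              ∑ d ∈ (Nat.gcd m n).divisors,
                (((d : ℝ) ^ (2 : ℕ)) / ((m : ℝ) * (n : ℝ))) ^ ((1 : ℝ) / 2 - ε)) ≤
          C * (N : ℝ) ^ (3 * ε) * ∑ n ∈ Finset.Icc 1 N, ‖α n‖ ^ (2 : ℕ) := by
  intro ε hε hε2
  obtain ⟨C₂, hC₂1, hτ⟩ := divisor_bound hε
  have hC₂0 : (0 : ℝ) < C₂ := lt_of_lt_of_le one_pos hC₂1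
  refine ⟨(1 + 1 / (2 * ε)) * C₂, by positivity, ?_⟩
  intro N hN α
  exact main_aux hε hε2 hC₂1 hτ N hN (fun m => ‖α m‖)
    (fun m => norm_nonneg _)
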